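/- InqB = InqKhL: for every PL-formula α, α belongs to inquisitive logic InqB (α is supported by every state in every model) if and only if the DELKh-formula Kh α is valid (true at every pointed epistemic model). -/

import Mathlib

/-- Formulas of the propositional language `PL` over atoms `P`. -/
inductive PLForm (P : Type) : Type
  | atom : P → PLForm P
  | bot  : PLForm P
  | and  : PLForm P → PLForm P → PLForm P
  | or   : PLForm P → PLForm P → PLForm P
  | imp  : PLForm P → PLForm P → PLForm P

/-- `¬α` abbreviates `α → ⊥`. -/
def PLForm.neg {P : Type} (α : PLForm P) : PLForm P := α.imp .bot

/-- The resolution space `S(α)`, realized as a type: `S(p)` and `S(⊥)` are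
singletons, `S(α∨β)` is the disjoint union, `S(α∧β)` the product, and
`S(α→β)` the full function space. -/
def RS (P : Type) : PLForm P → Type
  | .atom _  => Unit
  | .bot     => Unit
  | .or a b  => RS P a ⊕ RS P b
  | .and a b => RS P a × RS P b
  | .imp a b => RS P a → RS P b

/-- An epistemic (information) model over atoms `P` with worlds `W`:
`W` is nonempty and `V` a valuation. -/
structure Model (P W : Type) where
  ne : Nonempty W
  V : W → Set P

/-- The actual resolutions `R(w,α) ⊆ S(α)` at a world `w`. -/
def Res {P W : Type} (M : Model P W) (w : W) : (α : PLForm P) → Set (RS P α)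
  | .atom p  => {_u : Unit | p ∈ M.V w}
  | .bot     => ∅
  | .or a b  => (Sum.inl '' Res M w a) ∪ (Sum.inr '' Res M w b)
  | .and a b => (Res M w a) ×ˢ (Res M w b)
  | .imp a b => {f : RS P a → RS P b | f '' Res M w a ⊆ Res M w b}

/-- Formulas of the dynamic epistemic language `DELKh`. -/
inductive DForm (P : Type) : Type
  | atom : P → DForm P
  | bot  : DForm P
  | and  : DForm P → DForm P → DForm P
  | or   : DForm P → DForm P → DForm P
  | imp  : DForm P → DForm P → DForm P
  | K    : DForm P → DForm P
  | box  : DForm P → DForm P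
  | kh   : PLForm P → DForm P

def DForm.neg {P : Type} (φ : DForm P) : DForm P := φ.imp .bot
def DForm.dia {P : Type} (φ : DForm P) : DForm P := (DForm.box φ.neg).neg
def DForm.biImp {P : Type} (φ ψ : DForm P) : DForm P := (φ.imp ψ).and (ψ.imp φ)

/-- Embedding of `PL` into `DELKh`. -/
def PLForm.toD {P : Type} : PLForm P → DForm P
  | .atom p  => .atom p
  | .bot     => .bot
  | .and a b => (toD a).and (toD b)
  | .or a b  => (toD a).or (toD b)
  | .imp a b => (toD a).imp (toD b)

/-- The submodel of `M` determined by a nonempty set `s` of worlds,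
with the restricted valuation. -/
def Model.restrict {P W : Type} (M : Model P W) (s : Set W) (h : s.Nonempty) :
    Model P s :=
  { ne := ⟨⟨h.choose, h.choose_spec⟩⟩, V := fun w => M.V w.1 }

/-- Satisfaction of `DELKh`-formulas at a pointed model `(M,w)`. -/
def Sat (P : Type) : (W : Type) → Model P W → W → DForm P → Prop
  | _, M, w, .atom p  => p ∈ M.V w
  | _, _, _, .bot     => False
  | W, M, w, .and a b => Sat P W M w a ∧ Sat P W M w b
  | W, M, w, .or a b  => Sat P W M w a ∨ Sat P W M w b
  | W, M, w, .imp a b => Sat P W M w a → Sat P W M w b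
  | W, M, _, .K φ     => ∀ v : W, Sat P W M v φ
  | W, M, w, .box φ   =>
      ∀ (s : Set W) (h : w ∈ s), Sat P s (M.restrict s ⟨w, h⟩) ⟨w, h⟩ φ
  | W, M, _, .kh α    => ∃ x : RS P α, ∀ v : W, x ∈ Res M v α

/-- A `DELKh`-formula is valid if it holds at every pointed model. -/
def Valid {P : Type} (φ : DForm P) : Prop :=
  ∀ (W : Type) (M : Model P W) (w : W), Sat P W M w φ

/-- Semantic entailment from a set of `DELKh`-formulas. -/
def EntailsSet {P : Type} (Γ : Set (DForm P)) (φ : DForm P) : Prop :=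
  ∀ (W : Type) (M : Model P W) (w : W),
    (∀ ψ ∈ Γ, Sat P W M w ψ) → Sat P W M w φ

/-- Classical satisfaction of `PL`-formulas at a pointed model. -/
def PLSat {P W : Type} (M : Model P W) (w : W) : PLForm P → Prop
  | .atom p  => p ∈ M.V w
  | .bot     => False
  | .and a b => PLSat M w a ∧ PLSat M w b
  | .or a b  => PLSat M w a ∨ PLSat M w b
  | .imp a b => PLSat M w a → PLSat M w b

/-- Inquisitive support of `PL`-formulas at a state `s` of a model `M`. -/
def Support (P W : Type) (M : Model P W) : Set W → PLForm P → Prop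
  | s, .atom p  => ∀ w ∈ s, p ∈ M.V w
  | s, .bot     => s = ∅
  | s, .and a b => Support P W M s a ∧ Support P W M s b
  | s, .or a b  => Support P W M s a ∨ Support P W M s b
  | s, .imp a b => ∀ t ⊆ s, Support P W M t a → Support P W M t b

lemma rsNonempty {P : Type} : ∀ α : PLForm P, Nonempty (RS P α)
  | .atom _ => ⟨()⟩
  | .bot => ⟨()⟩
  | .or a _ => (rsNonempty a).elim fun x => ⟨Sum.inl x⟩
  | .and a b => (rsNonempty a).elim fun x => (rsNonempty b).elim fun y => ⟨(x, y)⟩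
  | .imp _ b => (rsNonempty b).elim fun y => ⟨fun _ => y⟩

lemma resRestrict {P W : Type} (M : Model P W) (s : Set W) (h : s.Nonempty) :
    ∀ (α : PLForm P) (v : s), Res (M.restrict s h) v α = Res M v.1 α
  | .atom _, _ => rfl
  | .bot, _ => rfl
  | .or a b, v => by
      simp only [Res, resRestrict M s h a v, resRestrict M s h b v]
  | .and a b, v => by
      simp only [Res, resRestrict M s h a v, resRestrict M s h b v]
      rfl
  | .imp a b, v => by
      simp only [Res, resRestrict M s h a v, resRestrict M s h b v]

lemma supportIff {P W : Type} (M : Model P W) (α : PLForm P) (s : Set W) :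
    Support P W M s α ↔ ∃ x : RS P α, ∀ w ∈ s, x ∈ Res M w α := by
  induction α generalizing s with
  | atom p =>
      simp only [Support, Res]
      exact ⟨fun h => ⟨(), h⟩, fun ⟨_, h⟩ => h⟩
  | bot =>
      simp only [Support, Res, Set.eq_empty_iff_forall_notMem, Set.mem_empty_iff_false]
      exact ⟨fun h => ⟨(), fun w hw => h w hw⟩, fun ⟨_, h⟩ w hw => h w hw⟩
  | and a b iha ihb =>
      simp only [Support, Res, iha, ihb]
      constructor
      · rintro ⟨⟨x, hx⟩, ⟨y, hy⟩⟩
        exact ⟨(x, y), fun w hw => ⟨hx w hw, hy w hw⟩⟩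
      · rintro ⟨⟨x, y⟩, h⟩
        exact ⟨⟨x, fun w hw => (h w hw).1⟩, ⟨y, fun w hw => (h w hw).2⟩⟩
  | or a b iha ihb =>
      simp only [Support, Res, iha, ihb]
      constructor
      · rintro (⟨x, hx⟩ | ⟨y, hy⟩)
        · exact ⟨Sum.inl x, fun w hw => Or.inl ⟨x, hx w hw, rfl⟩⟩
        · exact ⟨Sum.inr y, fun w hw => Or.inr ⟨y, hy w hw, rfl⟩⟩
      · rintro ⟨(x | y), h⟩
        · left
          refine ⟨x, fun w hw => ?_⟩
          rcases h w hw with ⟨x', hx', he⟩ | ⟨y', _, he⟩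
          · cases Sum.inl.inj he; exact hx'
          · exact absurd he (by simp)
        · right
          refine ⟨y, fun w hw => ?_⟩
          rcases h w hw with ⟨x', _, he⟩ | ⟨y', hy', he⟩
          · exact absurd he (by simp)
          · cases Sum.inr.inj he; exact hy'
  | imp a b iha ihb =>
      constructor
      · intro hsup
        classical
        have hf : ∀ x : RS P a, ∃ y : RS P b,
            ∀ w ∈ s, x ∈ Res M w a → y ∈ Res M w b := by
          intro x
          have ht : Support P W M {w ∈ s | x ∈ Res M w a} b :=
            hsup _ (fun w hw => hw.1) ((iha _).2 ⟨x, fun w hw => hw.2⟩)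
          obtain ⟨y, hy⟩ := (ihb _).1 ht
          exact ⟨y, fun w hw hx => hy w ⟨hw, hx⟩⟩
        choose f hfspec using hf
        refine ⟨f, fun w hw => ?_⟩
        rintro z ⟨x, hx, rfl⟩
        exact hfspec x w hw hx
      · rintro ⟨f, hf⟩ t hts hta
        obtain ⟨x, hx⟩ := (iha t).1 hta
        exact (ihb t).2 ⟨f x, fun w hw => hf w (hts hw) ⟨x, hx w hw, rfl⟩⟩

/-- `InqB = InqKhL`: `α` is supported by every state in every
model iff `Kh α` is valid. -/
theorem inqB_eq_inqKhL {P : Type} [Countable P] (α : PLForm P) :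
    (∀ (W : Type) (M : Model P W) (s : Set W), Support P W M s α) ↔
      Valid (DForm.kh α) := by
  constructor
  · intro h W M w
    obtain ⟨x, hx⟩ := (supportIff M α Set.univ).1 (h W M Set.univ)
    exact ⟨x, fun v => hx v trivial⟩
  · intro h W M s
    rcases Set.eq_empty_or_nonempty s with rfl | hne
    · exact (supportIff M α ∅).2 ((rsNonempty α).elim fun x => ⟨x, by simp⟩)
    · obtain ⟨x, hx⟩ := h s (M.restrict s hne) ⟨hne.choose, hne.choose_spec⟩
      refine (supportIff M α s).2 ⟨x, fun w hw => ?_⟩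
      have := hx ⟨w, hw⟩
      rwa [resRestrict] at this
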